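/- Assume 2k + 1 ≤ n, e = 0, A satisfies the (2k+1)-RIP (δ_{2k+1} < 1), every column of A has unit Euclidean norm, and there exists ρ ∈ (0,1) such that 2k α_k^RIP ‖x*‖₂ / min_{i∈S*}|x*_i| ≤ ρ. Then x* satisfies the recovery condition γ_k^RIP ‖e‖₂ < min_{i∈S*}|x*_i|/(2k) − α_k^RIP ‖x*‖₂, and for every SEA trajectory with initialization X⁰ = 0 and any step size η > 0, there exists t_s ≤ (k+1)/(1−ρ) such that S* ⊆ S^{t_s} and x^{t_s} = x*. -/

import Mathlib

noncomputable section
open Finset Matrix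

/-- Support of a vector as a finite set of indices. -/
def spt {d : ℕ} (x : Fin d → ℝ) : Finset (Fin d) :=
  Finset.univ.filter (fun i => x i ≠ 0)

/-- Euclidean (ℓ²) norm of a vector. -/
def l2norm {d : ℕ} (v : Fin d → ℝ) : ℝ :=
  Real.sqrt (∑ i, (v i) ^ 2)

/-- Sup (ℓ∞) norm of a vector. -/
def supNorm {d : ℕ} (v : Fin d → ℝ) : ℝ :=
  ⨆ i, |v i|

def ripConst {m n : ℕ} (A : Matrix (Fin m) (Fin n) ℝ) (l : ℕ) : ℝ :=
  sInf {δ : ℝ | 0 ≤ δ ∧ ∀ x : Fin n → ℝ, (spt x).card ≤ l →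
    (1 - δ) * ∑ i, (x i) ^ 2 ≤ ∑ j, (A.mulVec x j) ^ 2 ∧
    ∑ j, (A.mulVec x j) ^ 2 ≤ (1 + δ) * ∑ i, (x i) ^ 2}

def alphaRIP {m n : ℕ} (A : Matrix (Fin m) (Fin n) ℝ) (k : ℕ) : ℝ :=
  ripConst A (2 * k + 1) * (1 + ripConst A (2 * k) / (1 - ripConst A k))

def gammaRIP {m n : ℕ} (A : Matrix (Fin m) (Fin n) ℝ) (k : ℕ) : ℝ :=
  1 + ripConst A (2 * k + 1) * Real.sqrt (1 + ripConst A k) / (1 - ripConst A k)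

def oracleUpd {n : ℕ} (xstar : Fin n → ℝ) (η : ℝ) (S : Finset (Fin n)) : Fin n → ℝ :=
  fun i => if xstar i ≠ 0 ∧ i ∉ S then -η * xstar i else 0

def gradNoise {m n : ℕ} (A : Matrix (Fin m) (Fin n) ℝ) (y : Fin m → ℝ)
    (xstar : Fin n → ℝ) (η : ℝ) (S : Finset (Fin n)) (xt : Fin n → ℝ) : Fin n → ℝ :=
  oracleUpd xstar η S - η • (Aᵀ.mulVec (A.mulVec xt - y))

structure SEATraj {m n : ℕ} (k : ℕ) (A : Matrix (Fin m) (Fin n) ℝ) (y : Fin m → ℝ)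
    (η : ℝ) (X0 : Fin n → ℝ) where
  S : ℕ → Finset (Fin n)
  x : ℕ → Fin n → ℝ
  X : ℕ → Fin n → ℝ
  X_init : X 0 = X0
  card_S : ∀ t, (S t).card = k
  sel : ∀ t, ∀ i ∈ S t, ∀ j, j ∉ S t → |X t j| ≤ |X t i|
  x_supp : ∀ t, ∀ i, i ∉ S t → x t i = 0
  x_min : ∀ t, ∀ z : Fin n → ℝ, (∀ i, i ∉ S t → z i = 0) →
    l2norm (A.mulVec (x t) - y) ≤ l2norm (A.mulVec z - y)
  X_upd : ∀ t, X (t + 1) = X t - η • (Aᵀ.mulVec (A.mulVec (x t) - y))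

namespace SEAP

lemma sumSq_nonneg {d : ℕ} (u : Fin d → ℝ) : (0:ℝ) ≤ ∑ i, u i ^ 2 :=
  Finset.sum_nonneg fun i _ => sq_nonneg _

lemma l2norm_sq {d : ℕ} (u : Fin d → ℝ) : (l2norm u) ^ 2 = ∑ i, u i ^ 2 :=
  Real.sq_sqrt (sumSq_nonneg u)

lemma l2norm_nonneg {d : ℕ} (u : Fin d → ℝ) : 0 ≤ l2norm u := Real.sqrt_nonneg _

lemma mem_spt {d : ℕ} {x : Fin d → ℝ} {i : Fin d} : i ∈ spt x ↔ x i ≠ 0 := by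
  simp [spt]

lemma eq_zero_of_sumSq {d : ℕ} {u : Fin d → ℝ} (h : ∑ i, u i ^ 2 ≤ 0) : ∀ i, u i = 0 := by
  intro i
  have h0 : ∑ i, u i ^ 2 = 0 := le_antisymm h (sumSq_nonneg u)
  have h1 := (Finset.sum_eq_zero_iff_of_nonneg (fun i _ => sq_nonneg (u i))).1 h0 i
    (Finset.mem_univ i)
  exact pow_eq_zero_iff (by norm_num : 2 ≠ 0) |>.1 h1

lemma sumSq_le_of_l2 {d : ℕ} {u w : Fin d → ℝ} (h : l2norm u ≤ l2norm w) :
    ∑ i, u i ^ 2 ≤ ∑ i, w i ^ 2 := by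
  nlinarith [l2norm_sq u, l2norm_sq w, l2norm_nonneg u, l2norm_nonneg w]

lemma l2_le_of_sumSq {d : ℕ} {u w : Fin d → ℝ} (h : ∑ i, u i ^ 2 ≤ ∑ i, w i ^ 2) :
    l2norm u ≤ l2norm w := Real.sqrt_le_sqrt h

lemma sumSq_eq_dot {d : ℕ} (u : Fin d → ℝ) : ∑ i, u i ^ 2 = u ⬝ᵥ u := by
  simp [dotProduct, sq]

lemma sumSq_expand {d : ℕ} (r c : Fin d → ℝ) (ε : ℝ) :
    ∑ j, (r j + ε * c j) ^ 2
      = ∑ j, r j ^ 2 + (2 * ε * (∑ j, r j * c j) + ε ^ 2 * ∑ j, c j ^ 2) := by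
  have h1 : ∀ j, (r j + ε * c j) ^ 2
      = r j ^ 2 + (2 * ε * (r j * c j) + ε ^ 2 * c j ^ 2) := fun j => by ring
  rw [Finset.sum_congr rfl fun j _ => h1 j, Finset.sum_add_distrib, Finset.sum_add_distrib,
    ← Finset.mul_sum, ← Finset.mul_sum]

def ripSet {m n : ℕ} (A : Matrix (Fin m) (Fin n) ℝ) (l : ℕ) : Set ℝ :=
  {δ : ℝ | 0 ≤ δ ∧ ∀ x : Fin n → ℝ, (spt x).card ≤ l →
    (1 - δ) * ∑ i, (x i) ^ 2 ≤ ∑ j, (A.mulVec x j) ^ 2 ∧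
    ∑ j, (A.mulVec x j) ^ 2 ≤ (1 + δ) * ∑ i, (x i) ^ 2}

lemma ripConst_eq {m n : ℕ} (A : Matrix (Fin m) (Fin n) ℝ) (l : ℕ) :
    ripConst A l = sInf (ripSet A l) := rfl

lemma ripSet_nonempty {m n : ℕ} (A : Matrix (Fin m) (Fin n) ℝ) (hn : 1 ≤ n)
    (hcols : ∀ j : Fin n, ∑ i, (A i j) ^ 2 = 1) (l : ℕ) : ((n:ℝ)) ∈ ripSet A l := by
  have hb : ∀ x : Fin n → ℝ, ∑ j, (A.mulVec x j) ^ 2 ≤ (n:ℝ) * ∑ i, (x i) ^ 2 := by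
    intro x
    have h1 : ∀ j : Fin m, (A.mulVec x j) ^ 2 ≤ (∑ i, (A j i) ^ 2) * ∑ i, (x i) ^ 2 := by
      intro j
      have := Finset.sum_mul_sq_le_sq_mul_sq Finset.univ (fun i => A j i) x
      simpa [Matrix.mulVec, dotProduct] using this
    calc ∑ j, (A.mulVec x j) ^ 2 ≤ ∑ j : Fin m, (∑ i, (A j i) ^ 2) * ∑ i, (x i) ^ 2 :=
          Finset.sum_le_sum fun j _ => h1 j
      _ = (∑ j : Fin m, ∑ i, (A j i) ^ 2) * ∑ i, (x i) ^ 2 := by rw [Finset.sum_mul]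
      _ = (n:ℝ) * ∑ i, (x i) ^ 2 := by
          rw [Finset.sum_comm]
          simp [hcols]
  refine ⟨by positivity, fun x _ => ⟨?_, ?_⟩⟩
  · have h2 : (1 - (n:ℝ)) * ∑ i, (x i) ^ 2 ≤ 0 := by
      have h1 : (1 - (n:ℝ)) ≤ 0 := by
        have : (1:ℝ) ≤ (n:ℝ) := by exact_mod_cast hn
        linarith
      exact mul_nonpos_of_nonpos_of_nonneg h1 (sumSq_nonneg x)
    exact h2.trans (sumSq_nonneg _)
  · exact (hb x).trans (by nlinarith [sumSq_nonneg x])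

lemma ripSet_closed {m n : ℕ} (A : Matrix (Fin m) (Fin n) ℝ) (l : ℕ) :
    IsClosed (ripSet A l) := by
  have heq : ripSet A l = Set.Ici (0:ℝ) ∩ ⋂ x : Fin n → ℝ,
      {δ : ℝ | (spt x).card ≤ l →
        (1 - δ) * ∑ i, (x i) ^ 2 ≤ ∑ j, (A.mulVec x j) ^ 2 ∧
        ∑ j, (A.mulVec x j) ^ 2 ≤ (1 + δ) * ∑ i, (x i) ^ 2} := by
    ext δ
    simp only [ripSet, Set.mem_setOf_eq, Set.mem_inter_iff, Set.mem_Ici, Set.mem_iInter]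
  rw [heq]
  refine isClosed_Ici.inter (isClosed_iInter fun x => ?_)
  by_cases h : (spt x).card ≤ l
  · have h2 : {δ : ℝ | (spt x).card ≤ l →
        (1 - δ) * ∑ i, (x i) ^ 2 ≤ ∑ j, (A.mulVec x j) ^ 2 ∧
        ∑ j, (A.mulVec x j) ^ 2 ≤ (1 + δ) * ∑ i, (x i) ^ 2} =
      {δ : ℝ | (1 - δ) * ∑ i, (x i) ^ 2 ≤ ∑ j, (A.mulVec x j) ^ 2} ∩
      {δ : ℝ | ∑ j, (A.mulVec x j) ^ 2 ≤ (1 + δ) * ∑ i, (x i) ^ 2} := by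
      ext δ; simp [h]
    rw [h2]
    exact (isClosed_le (by continuity) continuous_const).inter
      (isClosed_le continuous_const (by continuity))
  · have h2 : {δ : ℝ | (spt x).card ≤ l →
        (1 - δ) * ∑ i, (x i) ^ 2 ≤ ∑ j, (A.mulVec x j) ^ 2 ∧
        ∑ j, (A.mulVec x j) ^ 2 ≤ (1 + δ) * ∑ i, (x i) ^ 2} = Set.univ := by
      ext δ; simp [h]
    rw [h2]; exact isClosed_univ

lemma rip_spec {m n : ℕ} (A : Matrix (Fin m) (Fin n) ℝ) (hn : 1 ≤ n)
    (hcols : ∀ j : Fin n, ∑ i, (A i j) ^ 2 = 1) (l : ℕ) :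
    ripConst A l ∈ ripSet A l := by
  rw [ripConst_eq]
  exact (ripSet_closed A l).csInf_mem ⟨_, ripSet_nonempty A hn hcols l⟩
    ⟨0, fun δ hδ => hδ.1⟩

lemma rip_mono {m n : ℕ} (A : Matrix (Fin m) (Fin n) ℝ) (hn : 1 ≤ n)
    (hcols : ∀ j : Fin n, ∑ i, (A i j) ^ 2 = 1) {l l' : ℕ} (h : l ≤ l') :
    ripConst A l ≤ ripConst A l' := by
  rw [ripConst_eq, ripConst_eq]
  refine csInf_le_csInf ⟨0, fun δ hδ => hδ.1⟩ ⟨_, ripSet_nonempty A hn hcols l'⟩ ?_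
  intro δ hδ
  exact ⟨hδ.1, fun x hx => hδ.2 x (hx.trans h)⟩

lemma cross_bound {m n : ℕ} (A : Matrix (Fin m) (Fin n) ℝ) (l : ℕ) (δ : ℝ)
    (hrip : ∀ x : Fin n → ℝ, (spt x).card ≤ l →
      (1 - δ) * ∑ i, (x i) ^ 2 ≤ ∑ j, (A.mulVec x j) ^ 2 ∧
      ∑ j, (A.mulVec x j) ^ 2 ≤ (1 + δ) * ∑ i, (x i) ^ 2)
    (u v : Fin n → ℝ) (hdisj : ∀ i, u i = 0 ∨ v i = 0)
    (hcard : (spt u).card + (spt v).card ≤ l) :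
    |(A.mulVec u) ⬝ᵥ (A.mulVec v)| ≤ δ * l2norm u * l2norm v := by
  by_cases hu : ∑ i, u i ^ 2 ≤ 0
  · have hz : ∀ i, u i = 0 := eq_zero_of_sumSq hu
    have hu0 : u = 0 := funext hz
    rw [hu0]
    simp [l2norm, Matrix.mulVec_zero]
  by_cases hv : ∑ i, v i ^ 2 ≤ 0
  · have hz : ∀ i, v i = 0 := eq_zero_of_sumSq hv
    have hv0 : v = 0 := funext hz
    rw [hv0]
    simp [l2norm, Matrix.mulVec_zero]
  push_neg at hu hv
  set a := l2norm v with ha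
  set b := l2norm u with hb
  have ha2 : a ^ 2 = ∑ i, v i ^ 2 := l2norm_sq v
  have hb2 : b ^ 2 = ∑ i, u i ^ 2 := l2norm_sq u
  have hapos : 0 < a := Real.sqrt_pos.2 hv
  have hbpos : 0 < b := Real.sqrt_pos.2 hu
  set p : Fin n → ℝ := a • u + b • v with hp
  set q : Fin n → ℝ := a • u - b • v with hq
  have hmulz : ∀ i, u i * v i = 0 := by
    intro i; rcases hdisj i with h | h <;> simp [h]
  have hSp : ∑ i, p i ^ 2 = a ^ 2 * ∑ i, u i ^ 2 + b ^ 2 * ∑ i, v i ^ 2 := by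
    have h1 : ∀ i, p i ^ 2 = a ^ 2 * u i ^ 2 + b ^ 2 * v i ^ 2 := by
      intro i
      have := hmulz i
      simp only [hp, Pi.add_apply, Pi.smul_apply, smul_eq_mul]
      linear_combination (2 * a * b) * this
    rw [Finset.sum_congr rfl fun i _ => h1 i, Finset.sum_add_distrib, ← Finset.mul_sum,
      ← Finset.mul_sum]
  have hSq : ∑ i, q i ^ 2 = a ^ 2 * ∑ i, u i ^ 2 + b ^ 2 * ∑ i, v i ^ 2 := by
    have h1 : ∀ i, q i ^ 2 = a ^ 2 * u i ^ 2 + b ^ 2 * v i ^ 2 := by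
      intro i
      have := hmulz i
      simp only [hq, Pi.sub_apply, Pi.smul_apply, smul_eq_mul]
      linear_combination (-2 * a * b) * this
    rw [Finset.sum_congr rfl fun i _ => h1 i, Finset.sum_add_distrib, ← Finset.mul_sum,
      ← Finset.mul_sum]
  have hcardp : (spt p).card ≤ l := by
    refine le_trans (Finset.card_le_card (?_ : spt p ⊆ spt u ∪ spt v)) ?_
    · exact fun i hi => by
        rw [mem_spt] at hi
        rw [Finset.mem_union, mem_spt, mem_spt]
        by_contra hc
        push_neg at hc
        exact hi (by simp [hp, Pi.add_apply, Pi.smul_apply, hc.1, hc.2])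
    · exact le_trans (Finset.card_union_le _ _) hcard
  have hcardq : (spt q).card ≤ l := by
    refine le_trans (Finset.card_le_card (?_ : spt q ⊆ spt u ∪ spt v)) ?_
    · exact fun i hi => by
        rw [mem_spt] at hi
        rw [Finset.mem_union, mem_spt, mem_spt]
        by_contra hc
        push_neg at hc
        exact hi (by simp [hq, Pi.sub_apply, Pi.smul_apply, hc.1, hc.2])
    · exact le_trans (Finset.card_union_le _ _) hcard
  have hAp : A.mulVec p = a • A.mulVec u + b • A.mulVec v := by
    rw [hp, Matrix.mulVec_add, Matrix.mulVec_smul, Matrix.mulVec_smul]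
  have hAq : A.mulVec q = a • A.mulVec u - b • A.mulVec v := by
    rw [hq, Matrix.mulVec_sub, Matrix.mulVec_smul, Matrix.mulVec_smul]
  set D : ℝ := (A.mulVec u) ⬝ᵥ (A.mulVec v) with hD
  have hdot : ∑ j, (A.mulVec p j) ^ 2 - ∑ j, (A.mulVec q j) ^ 2 = 4 * a * b * D := by
    rw [← Finset.sum_sub_distrib]
    have h1 : ∀ j, (A.mulVec p j) ^ 2 - (A.mulVec q j) ^ 2
        = 4 * a * b * (A.mulVec u j * A.mulVec v j) := by
      intro j
      rw [hAp, hAq]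
      simp only [Pi.add_apply, Pi.sub_apply, Pi.smul_apply, smul_eq_mul]
      ring
    rw [Finset.sum_congr rfl fun j _ => h1 j, ← Finset.mul_sum]
    rfl
  have hrp := hrip p hcardp
  have hrq := hrip q hcardq
  have hSS : a ^ 2 * ∑ i, u i ^ 2 + b ^ 2 * ∑ i, v i ^ 2 = 2 * (a * b) ^ 2 := by
    rw [← hb2, ← ha2]; ring
  rw [hSp, hSS] at hrp
  rw [hSq, hSS] at hrq
  have habpos : 0 < a * b := mul_pos hapos hbpos
  rw [abs_le]
  constructor
  · nlinarith [hrp.1, hrq.2, hdot, habpos]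
  · nlinarith [hrp.2, hrq.1, hdot, habpos]


section Aux
variable {m n k : ℕ} {A : Matrix (Fin m) (Fin n) ℝ} {y : Fin m → ℝ}
  {xstar : Fin n → ℝ} {η : ℝ} {traj : SEATraj k A y η (0 : Fin n → ℝ)}

lemma aux_suby (hy2 : y = A.mulVec xstar) (t : ℕ) :
    A.mulVec (traj.x t) - y = A.mulVec (traj.x t - xstar) := by
  rw [Matrix.mulVec_sub]
  exact congrArg (fun w => A.mulVec (traj.x t) - w) hy2

lemma aux_normal (t : ℕ) (i : Fin n) (hi : i ∈ traj.S t) :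
    (Aᵀ.mulVec (A.mulVec (traj.x t) - y)) i = 0 := by
  classical
  set r : Fin m → ℝ := A.mulVec (traj.x t) - y with hr
  set c : Fin m → ℝ := fun j => A j i with hc
  have hkey : ∀ ε : ℝ, 0 ≤ 2 * ε * (∑ j, r j * c j) + ε ^ 2 * ∑ j, c j ^ 2 := by
    intro ε
    have hsupp : ∀ i', i' ∉ traj.S t → (traj.x t + (Pi.single i ε : Fin n → ℝ)) i' = 0 := by
      intro i' hi'
      have h1 := traj.x_supp t i' hi'
      have hne' : i' ≠ i := fun hh => hi' (hh ▸ hi)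
      simp [h1, Pi.single_eq_of_ne hne']
    have hmin := traj.x_min t _ hsupp
    have hAz : A.mulVec (traj.x t + (Pi.single i ε : Fin n → ℝ)) - y
        = fun j => r j + ε * c j := by
      funext j
      rw [Matrix.mulVec_add, Matrix.mulVec_single]
      simp only [Pi.sub_apply, Pi.add_apply, hr, hc, Pi.smul_apply, Matrix.col_apply, op_smul_eq_mul]
      ring
    rw [hAz] at hmin
    have h2 : ∑ j, r j ^ 2 ≤ ∑ j, (r j + ε * c j) ^ 2 := by
      exact SEAP.sumSq_le_of_l2 hmin
    rw [SEAP.sumSq_expand r c ε] at h2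
    linarith
  set c0 := ∑ j, r j * c j with hc0
  set d0 := ∑ j, c j ^ 2 with hd0
  have hd0n : 0 ≤ d0 := SEAP.sumSq_nonneg c
  have hd1 : (0:ℝ) < d0 + 1 := by linarith
  have hε := hkey (-c0 / (d0 + 1))
  set ε := -c0 / (d0 + 1) with hεdef
  have he2 : ε * (d0 + 1) = -c0 := by
    rw [hεdef]; field_simp
  have h2e : 2 * ε * c0 = -(2 * ε ^ 2 * (d0 + 1)) := by
    have h6 : c0 = -(ε * (d0 + 1)) := by linarith
    rw [h6]; ring
  rw [h2e] at hε
  have hεz : ε = 0 := by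
    have h3 : ε ^ 2 ≤ 0 := by nlinarith
    have h4 : ε ^ 2 = 0 := le_antisymm h3 (sq_nonneg ε)
    exact pow_eq_zero_iff (by norm_num : 2 ≠ 0) |>.1 h4
  have hc00 : c0 = 0 := by
    rw [hεz] at he2
    simpa using he2.symm
  have hco : (Aᵀ.mulVec r) i = c0 := by
    simp only [hc0, hc, Matrix.mulVec, dotProduct, Matrix.transpose_apply]
    exact Finset.sum_congr rfl fun j _ => mul_comm _ _
  rw [hco]
  exact hc00

lemma aux_normal2 (t : ℕ) (z : Fin n → ℝ) (hz : ∀ i, i ∉ traj.S t → z i = 0) :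
    (A.mulVec z) ⬝ᵥ (A.mulVec (traj.x t) - y) = 0 := by
  classical
  have h1 : (A.mulVec z) ⬝ᵥ (A.mulVec (traj.x t) - y)
      = (Aᵀ.mulVec (A.mulVec (traj.x t) - y)) ⬝ᵥ z := by
    rw [dotProduct_comm, Matrix.dotProduct_mulVec, ← Matrix.mulVec_transpose]
  rw [h1]
  simp only [dotProduct]
  apply Finset.sum_eq_zero
  intro i _
  by_cases hi : i ∈ traj.S t
  · rw [aux_normal t i hi]; ring
  · rw [hz i hi]; ring

lemma aux_good (hy2 : y = A.mulVec xstar) (hRIP : ripConst A (2 * k + 1) < 1)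
    (hrip3 : ∀ x : Fin n → ℝ, (spt x).card ≤ 2 * k + 1 →
      (1 - ripConst A (2 * k + 1)) * ∑ i, (x i) ^ 2 ≤ ∑ j, (A.mulVec x j) ^ 2 ∧
      ∑ j, (A.mulVec x j) ^ 2 ≤ (1 + ripConst A (2 * k + 1)) * ∑ i, (x i) ^ 2)
    (t : ℕ) (hsub : spt xstar ⊆ traj.S t) : traj.x t = xstar := by
  classical
  have hzs : ∀ i, i ∉ traj.S t → xstar i = 0 := by
    intro i hi
    by_contra hx
    exact hi (hsub (SEAP.mem_spt.2 hx))
  have hmin := traj.x_min t xstar hzs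
  have hy0 : A.mulVec xstar - y = 0 := by rw [hy2, sub_self]
  rw [hy0] at hmin
  have h0 : l2norm (A.mulVec (traj.x t) - y) ≤ 0 := by
    simpa [l2norm] using hmin
  have hsum0 : ∑ j, ((A.mulVec (traj.x t) - y) j) ^ 2 ≤ 0 := by
    nlinarith [SEAP.l2norm_sq (A.mulVec (traj.x t) - y),
      SEAP.l2norm_nonneg (A.mulVec (traj.x t) - y)]
  rw [aux_suby hy2 t] at hsum0
  have hcardh : (spt (traj.x t - xstar)).card ≤ 2 * k + 1 := by
    have hsb : spt (traj.x t - xstar) ⊆ traj.S t := by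
      intro i hi
      rw [SEAP.mem_spt] at hi
      by_contra hc
      exact hi (by simp [Pi.sub_apply, traj.x_supp t i hc, hzs i hc])
    have hcc := Finset.card_le_card hsb
    rw [traj.card_S t] at hcc
    omega
  have hlow := (hrip3 (traj.x t - xstar) hcardh).1
  have h3δ : 0 < 1 - ripConst A (2 * k + 1) := by linarith
  have hhz : ∀ i, (traj.x t - xstar) i = 0 := by
    apply SEAP.eq_zero_of_sumSq
    nlinarith [SEAP.sumSq_nonneg (traj.x t - xstar)]
  funext i
  have h4 := hhz i
  simp only [Pi.sub_apply, sub_eq_zero] at h4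
  exact h4

lemma aux_Xbound (hy2 : y = A.mulVec xstar) (hspars : (spt xstar).card ≤ k)
    {δ1 δ2 : ℝ} (h1δ : 0 < 1 - δ1) (hδ2_0 : 0 ≤ δ2)
    (hrip1 : ∀ x : Fin n → ℝ, (spt x).card ≤ k →
      (1 - δ1) * ∑ i, (x i) ^ 2 ≤ ∑ j, (A.mulVec x j) ^ 2)
    (hrip2 : ∀ x : Fin n → ℝ, (spt x).card ≤ 2 * k →
      (1 - δ2) * ∑ i, (x i) ^ 2 ≤ ∑ j, (A.mulVec x j) ^ 2 ∧
      ∑ j, (A.mulVec x j) ^ 2 ≤ (1 + δ2) * ∑ i, (x i) ^ 2)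
    (t : ℕ) :
    l2norm (xstar - traj.x t) ≤ (1 + δ2 / (1 - δ1)) * l2norm xstar := by
  classical
  set xS : Fin n → ℝ := fun i => if i ∈ traj.S t then xstar i else 0 with hxS
  set v : Fin n → ℝ := fun i => if i ∈ traj.S t then 0 else xstar i with hv
  set w : Fin n → ℝ := fun i => traj.x t i - xS i with hw
  have hwsupp : ∀ i, i ∉ traj.S t → w i = 0 := by
    intro i hi; simp [hw, hxS, hi, traj.x_supp t i hi]
  have hvsupp : ∀ i, i ∈ traj.S t → v i = 0 := by
    intro i hi; simp [hv, hi]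
  have hdisj : ∀ i, w i = 0 ∨ v i = 0 := by
    intro i
    by_cases hi : i ∈ traj.S t
    · exact Or.inr (hvsupp i hi)
    · exact Or.inl (hwsupp i hi)
  have hcardw : (spt w).card ≤ k := by
    have hsb : spt w ⊆ traj.S t := fun i hi => by
      rw [SEAP.mem_spt] at hi
      by_contra hc
      exact hi (hwsupp i hc)
    have hcc := Finset.card_le_card hsb
    rw [traj.card_S t] at hcc
    exact hcc
  have hcardv : (spt v).card ≤ k := by
    refine le_trans (Finset.card_le_card (fun i hi => ?_)) hspars
    rw [SEAP.mem_spt] at hi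
    rw [SEAP.mem_spt]
    intro hcz
    exact hi (by simp [hv, hcz])
  have hdiffeq : traj.x t - xstar = w - v := by
    funext i
    by_cases hi : i ∈ traj.S t <;>
      simp [hw, hv, hxS, hi, Pi.sub_apply]
  have hortho := aux_normal2 t w hwsupp
  have hAxy : A.mulVec (traj.x t) - y = A.mulVec w - A.mulVec v := by
    rw [aux_suby hy2 t, hdiffeq, Matrix.mulVec_sub]
  rw [hAxy, dotProduct_sub, sub_eq_zero] at hortho
  have hlow := hrip1 w hcardw
  have hcross := SEAP.cross_bound A (2 * k) δ2 hrip2 w v hdisj (by omega)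
  have hsum_dot : ∑ j, (A.mulVec w j) ^ 2 = (A.mulVec w) ⬝ᵥ (A.mulVec w) :=
    SEAP.sumSq_eq_dot _
  have hnw2 : (l2norm w) ^ 2 = ∑ i, w i ^ 2 := SEAP.l2norm_sq w
  have hkey : (1 - δ1) * (l2norm w) ^ 2 ≤ δ2 * l2norm w * l2norm v := by
    calc (1 - δ1) * (l2norm w) ^ 2
        = (1 - δ1) * ∑ i, w i ^ 2 := by rw [hnw2]
      _ ≤ ∑ j, (A.mulVec w j) ^ 2 := hlow
      _ = (A.mulVec w) ⬝ᵥ (A.mulVec v) := by rw [hsum_dot, hortho]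
      _ ≤ δ2 * l2norm w * l2norm v := le_trans (le_abs_self _) hcross
  have hnwb : l2norm w ≤ δ2 / (1 - δ1) * l2norm v := by
    rcases eq_or_lt_of_le (SEAP.l2norm_nonneg w) with h0 | h0
    · rw [← h0]
      exact mul_nonneg (div_nonneg hδ2_0 h1δ.le) (SEAP.l2norm_nonneg v)
    · rw [div_mul_eq_mul_div, le_div_iff₀ h1δ]
      nlinarith [hkey, h0]
  have hnvx : l2norm v ≤ l2norm xstar := by
    apply SEAP.l2_le_of_sumSq
    apply Finset.sum_le_sum
    intro i _
    by_cases hi : i ∈ traj.S t <;> simp [hv, hi]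
    positivity
  have hxd : xstar - traj.x t = v - w := by
    funext i
    by_cases hi : i ∈ traj.S t <;>
      simp [hw, hv, hxS, hi, Pi.sub_apply] <;> ring
  have hsum_vw : ∑ i, (v i - w i) ^ 2 = ∑ i, v i ^ 2 + ∑ i, w i ^ 2 := by
    rw [← Finset.sum_add_distrib]
    apply Finset.sum_congr rfl
    intro i _
    rcases hdisj i with h | h <;> rw [h] <;> ring
  have htri : l2norm (v - w) ≤ l2norm v + l2norm w := by
    have h1 : ∑ i, ((v - w) i) ^ 2 ≤ (l2norm v + l2norm w) ^ 2 := by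
      simp only [Pi.sub_apply]
      rw [hsum_vw]
      nlinarith [SEAP.l2norm_sq v, SEAP.l2norm_sq w,
        mul_nonneg (SEAP.l2norm_nonneg v) (SEAP.l2norm_nonneg w)]
    calc l2norm (v - w) = Real.sqrt (∑ i, ((v - w) i) ^ 2) := rfl
      _ ≤ Real.sqrt ((l2norm v + l2norm w) ^ 2) := Real.sqrt_le_sqrt h1
      _ = l2norm v + l2norm w := Real.sqrt_sq
          (add_nonneg (SEAP.l2norm_nonneg v) (SEAP.l2norm_nonneg w))
  rw [hxd]
  have hfacnn : (0:ℝ) ≤ 1 + δ2 / (1 - δ1) := by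
    have := div_nonneg hδ2_0 h1δ.le
    linarith
  calc l2norm (v - w) ≤ l2norm v + l2norm w := htri
    _ ≤ l2norm v + δ2 / (1 - δ1) * l2norm v := by linarith [hnwb]
    _ = (1 + δ2 / (1 - δ1)) * l2norm v := by ring
    _ ≤ (1 + δ2 / (1 - δ1)) * l2norm xstar := mul_le_mul_of_nonneg_left hnvx hfacnn

lemma aux_step0 (t : ℕ) (i : Fin n) (hi : i ∈ traj.S t) :
    traj.X (t + 1) i = traj.X t i := by
  rw [traj.X_upd t]
  simp [Pi.sub_apply, Pi.smul_apply, aux_normal t i hi]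

lemma aux_step (hy2 : y = A.mulVec xstar)
    (hcols : ∀ j : Fin n, ∑ i, (A i j) ^ 2 = 1)
    (hspars : (spt xstar).card ≤ k) (hη : 0 ≤ η)
    {δ1 δ2 δ3 : ℝ} (h1δ : 0 < 1 - δ1) (hδ2_0 : 0 ≤ δ2) (hδ3_0 : 0 ≤ δ3)
    (hrip1 : ∀ x : Fin n → ℝ, (spt x).card ≤ k →
      (1 - δ1) * ∑ i, (x i) ^ 2 ≤ ∑ j, (A.mulVec x j) ^ 2)
    (hrip2 : ∀ x : Fin n → ℝ, (spt x).card ≤ 2 * k →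
      (1 - δ2) * ∑ i, (x i) ^ 2 ≤ ∑ j, (A.mulVec x j) ^ 2 ∧
      ∑ j, (A.mulVec x j) ^ 2 ≤ (1 + δ2) * ∑ i, (x i) ^ 2)
    (hrip3 : ∀ x : Fin n → ℝ, (spt x).card ≤ 2 * k + 1 →
      (1 - δ3) * ∑ i, (x i) ^ 2 ≤ ∑ j, (A.mulVec x j) ^ 2 ∧
      ∑ j, (A.mulVec x j) ^ 2 ≤ (1 + δ3) * ∑ i, (x i) ^ 2)
    (t : ℕ) (i : Fin n) (hi : i ∉ traj.S t) :
    |traj.X (t + 1) i - traj.X t i - η * xstar i|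
      ≤ η * (δ3 * ((1 + δ2 / (1 - δ1)) * l2norm xstar)) := by
  classical
  set g : Fin n → ℝ := traj.x t - xstar with hg
  have hgi : g i = -xstar i := by
    simp [hg, Pi.sub_apply, traj.x_supp t i hi]
  set gt : Fin n → ℝ := fun j => if j = i then 0 else g j with hgt
  have hgdecomp : g = (Pi.single i (g i) : Fin n → ℝ) + gt := by
    funext j
    by_cases hji : j = i
    · subst hji; simp [hgt]
    · simp [hgt, hji, Pi.single_eq_of_ne hji]
  have hrq : A.mulVec (traj.x t) - y = A.mulVec g := aux_suby hy2 t
  set E := (A.mulVec (Pi.single i (1:ℝ) : Fin n → ℝ)) ⬝ᵥ (A.mulVec gt) with hE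
  have hcoord : (Aᵀ.mulVec (A.mulVec g)) i = g i + E := by
    have h1 : (Aᵀ.mulVec (A.mulVec g)) i
        = (A.mulVec (Pi.single i (1:ℝ) : Fin n → ℝ)) ⬝ᵥ (A.mulVec g) := by
      rw [Matrix.mulVec_single]
      simp only [Matrix.mulVec, dotProduct, Matrix.transpose_apply, Pi.smul_apply, Matrix.col_apply,
        op_smul_eq_mul, mul_one]
    have hsplit : A.mulVec g
        = A.mulVec (Pi.single i (g i) : Fin n → ℝ) + A.mulVec gt := by
      rw [← Matrix.mulVec_add]
      exact congrArg (fun z => A.mulVec z) hgdecomp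
    rw [h1, hsplit, dotProduct_add]
    congr 1
    rw [Matrix.mulVec_single, Matrix.mulVec_single]
    simp only [dotProduct, Pi.smul_apply, Matrix.col_apply, op_smul_eq_mul, mul_one]
    have h2 : ∀ j, A j i * (A j i * g i) = (A j i) ^ 2 * g i := fun j => by ring
    rw [Finset.sum_congr rfl fun j _ => h2 j, ← Finset.sum_mul, hcols i, one_mul]
  have hdisj : ∀ j, (Pi.single i (1:ℝ) : Fin n → ℝ) j = 0 ∨ gt j = 0 := by
    intro j
    by_cases hji : j = i
    · subst hji; exact Or.inr (by simp [hgt])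
    · exact Or.inl (Pi.single_eq_of_ne hji 1)
  have hcards : (spt (Pi.single i (1:ℝ) : Fin n → ℝ)).card + (spt gt).card
      ≤ 2 * k + 1 := by
    have h1 : spt (Pi.single i (1:ℝ) : Fin n → ℝ) ⊆ {i} := by
      intro j hj
      rw [SEAP.mem_spt] at hj
      rw [Finset.mem_singleton]
      by_contra hc
      exact hj (Pi.single_eq_of_ne hc 1)
    have h2 : spt gt ⊆ traj.S t ∪ spt xstar := by
      intro j hj
      rw [SEAP.mem_spt] at hj
      rw [Finset.mem_union, SEAP.mem_spt]
      by_contra hc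
      push_neg at hc
      have hx0 := traj.x_supp t j hc.1
      have hgj : g j = 0 := by simp [hg, Pi.sub_apply, hx0, hc.2]
      exact hj (by simp [hgt, hgj])
    have h3 := Finset.card_le_card h1
    have h4 := Finset.card_le_card h2
    have h5 := Finset.card_union_le (traj.S t) (spt xstar)
    rw [traj.card_S t] at h5
    simp only [Finset.card_singleton] at h3
    omega
  have hcross := SEAP.cross_bound A (2 * k + 1) δ3 hrip3
    (Pi.single i (1:ℝ) : Fin n → ℝ) gt hdisj hcards
  have hsing : l2norm (Pi.single i (1:ℝ) : Fin n → ℝ) = 1 := by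
    have h1 : ∑ j, ((Pi.single i (1:ℝ) : Fin n → ℝ) j) ^ 2 = 1 := by
      rw [Finset.sum_eq_single i]
      · simp
      · intro j _ hji
        rw [Pi.single_eq_of_ne hji]
        simp
      · intro hip
        exact absurd (Finset.mem_univ i) hip
    rw [l2norm, h1, Real.sqrt_one]
  have hgtg : l2norm gt ≤ l2norm g := by
    apply SEAP.l2_le_of_sumSq
    apply Finset.sum_le_sum
    intro j _
    by_cases hji : j = i <;> simp [hgt, hji]
    positivity
  have hgx : l2norm g = l2norm (xstar - traj.x t) := by
    unfold l2norm
    congr 1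
    apply Finset.sum_congr rfl
    intro j _
    simp only [hg, Pi.sub_apply]
    ring
  have hXb := aux_Xbound (traj := traj) hy2 hspars h1δ hδ2_0 hrip1 hrip2 t
  have hEb : |E| ≤ δ3 * ((1 + δ2 / (1 - δ1)) * l2norm xstar) := by
    rw [hE]
    calc |(A.mulVec (Pi.single i (1:ℝ) : Fin n → ℝ)) ⬝ᵥ (A.mulVec gt)|
        ≤ δ3 * l2norm (Pi.single i (1:ℝ) : Fin n → ℝ) * l2norm gt := hcross
      _ = δ3 * l2norm gt := by rw [hsing, mul_one]
      _ ≤ δ3 * l2norm g := mul_le_mul_of_nonneg_left hgtg hδ3_0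
      _ = δ3 * l2norm (xstar - traj.x t) := by rw [hgx]
      _ ≤ δ3 * ((1 + δ2 / (1 - δ1)) * l2norm xstar) :=
          mul_le_mul_of_nonneg_left hXb hδ3_0
  have hXd : traj.X (t + 1) i - traj.X t i
      = -(η * ((Aᵀ.mulVec (A.mulVec (traj.x t) - y)) i)) := by
    rw [traj.X_upd t]
    simp only [Pi.sub_apply, Pi.smul_apply, smul_eq_mul]
    ring
  rw [hrq, hcoord, hgi] at hXd
  have hfin : traj.X (t + 1) i - traj.X t i - η * xstar i = -(η * E) := by
    rw [hXd]; ring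
  rw [hfin, abs_neg, abs_mul, abs_of_nonneg hη]
  exact mul_le_mul_of_nonneg_left hEb hη

end Aux
end SEAP

set_option maxHeartbeats 1000000 in
theorem sea_noiseless_recovery_simplified_RIP {m n k : ℕ} (hm : 0 < m) (hk : 0 < k)
    (hkn : 2 * k + 1 ≤ n)
    (A : Matrix (Fin m) (Fin n) ℝ) (hRIP : ripConst A (2 * k + 1) < 1)
    (hcols : ∀ j : Fin n, ∑ i, (A i j) ^ 2 = 1)
    (xstar : Fin n → ℝ) (hspars : (spt xstar).card ≤ k) (hne : (spt xstar).Nonempty)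
    (e : Fin m → ℝ) (he : e = 0) (y : Fin m → ℝ) (hy : y = A.mulVec xstar + e)
    (ρ : ℝ) (hρ0 : 0 < ρ) (hρ1 : ρ < 1)
    (hSRC : 2 * k * alphaRIP A k * l2norm xstar /
      ((spt xstar).inf' hne (fun i => |xstar i|)) ≤ ρ) :
    (gammaRIP A k * l2norm e <
      ((spt xstar).inf' hne (fun i => |xstar i|)) / (2 * k) -
        alphaRIP A k * l2norm xstar) ∧
    ∀ (η : ℝ), 0 < η → ∀ (traj : SEATraj k A y η (0 : Fin n → ℝ)),
      ∃ ts : ℕ, (ts : ℝ) ≤ (k + 1) / (1 - ρ) ∧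
        spt xstar ⊆ traj.S ts ∧ traj.x ts = xstar := by
  classical
  have hn : 1 ≤ n := by omega
  have hy2 : y = A.mulVec xstar := by rw [hy, he]; simp
  obtain ⟨hδ1_0, hrip1⟩ := SEAP.rip_spec A hn hcols k
  obtain ⟨hδ2_0, hrip2⟩ := SEAP.rip_spec A hn hcols (2 * k)
  obtain ⟨hδ3_0, hrip3⟩ := SEAP.rip_spec A hn hcols (2 * k + 1)
  have h12 : ripConst A k ≤ ripConst A (2 * k) := SEAP.rip_mono A hn hcols (by omega)
  have h23 : ripConst A (2 * k) ≤ ripConst A (2 * k + 1) := SEAP.rip_mono A hn hcols (by omega)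
  have h1δ : 0 < 1 - ripConst A k := by linarith
  have hμpos : 0 < (spt xstar).inf' hne (fun i => |xstar i|) := by
    rw [Finset.lt_inf'_iff]
    exact fun i hi => abs_pos.2 (SEAP.mem_spt.1 hi)
  set μ := (spt xstar).inf' hne (fun i => |xstar i|) with hμdef
  have hμle : ∀ i ∈ spt xstar, μ ≤ |xstar i| := fun i hi => Finset.inf'_le _ hi
  have hα0 : 0 ≤ alphaRIP A k := by
    have hd : 0 ≤ ripConst A (2 * k) / (1 - ripConst A k) := div_nonneg hδ2_0 h1δ.le
    have h1 : (0:ℝ) ≤ 1 + ripConst A (2 * k) / (1 - ripConst A k) := by linarith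
    exact mul_nonneg hδ3_0 h1
  have hnx0 : 0 ≤ l2norm xstar := SEAP.l2norm_nonneg xstar
  set β := alphaRIP A k * l2norm xstar with hβdef
  have hβ0 : 0 ≤ β := mul_nonneg hα0 hnx0
  have hK1 : (1:ℝ) ≤ (k:ℝ) := by exact_mod_cast hk
  have hSRC' : 2 * (k:ℝ) * β ≤ ρ * μ := by
    have h5 := (div_le_iff₀ hμpos).1 hSRC
    calc 2 * (k:ℝ) * β = 2 * (k:ℝ) * alphaRIP A k * l2norm xstar := by rw [hβdef]; ring
      _ ≤ ρ * μ := h5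
  have hβμ2 : β ≤ μ / 2 := by nlinarith
  have hμβpos : 0 < μ - β := by nlinarith
  constructor
  · rw [he]
    have hz : l2norm (0 : Fin m → ℝ) = 0 := by simp [l2norm]
    rw [hz, mul_zero]
    have hb : β < μ / (2 * (k:ℝ)) := by
      rw [lt_div_iff₀ (by positivity)]
      nlinarith
    push_cast
    linarith
  · intro η hη traj
    have hgood : ∀ t, spt xstar ⊆ traj.S t → traj.x t = xstar :=
      fun t hsub => SEAP.aux_good hy2 hRIP hrip3 t hsub
    have hstep0 : ∀ (t : ℕ) (i : Fin n), i ∈ traj.S t → traj.X (t + 1) i = traj.X t i :=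
      fun t i hi => SEAP.aux_step0 t i hi
    have hstep : ∀ (t : ℕ) (i : Fin n), i ∉ traj.S t →
        |traj.X (t + 1) i - traj.X t i - η * xstar i| ≤ η * β := by
      intro t i hi
      have h1 := SEAP.aux_step hy2 hcols hspars hη.le h1δ hδ2_0 hδ3_0
        (fun x hx => (hrip1 x hx).1) hrip2 hrip3 t i hi
      have h2 : η * (ripConst A (2 * k + 1)
          * ((1 + ripConst A (2 * k) / (1 - ripConst A k)) * l2norm xstar)) = η * β := by
        rw [hβdef]; unfold alphaRIP; ring
      rw [h2] at h1
      exact h1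
    -- invariant: off-support entries stay small
    have hI1 : ∀ j, j ∉ spt xstar → ∀ t : ℕ, |traj.X t j| ≤ (t : ℝ) * (η * β) := by
      intro j hj t
      induction t with
      | zero => simp [traj.X_init]
      | succ t ih =>
        have hηβ : 0 ≤ η * β := mul_nonneg hη.le hβ0
        by_cases hjS : j ∈ traj.S t
        · rw [hstep0 t j hjS]
          push_cast
          linarith [ih, hηβ]
        · have h1 := hstep t j hjS
          have hxj : xstar j = 0 := by
            by_contra hc
            exact hj (SEAP.mem_spt.2 hc)
          rw [hxj, mul_zero, sub_zero] at h1
          have h2 : |traj.X (t + 1) j| ≤ |traj.X t j| + η * β := by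
            calc |traj.X (t + 1) j|
                = |traj.X t j + (traj.X (t + 1) j - traj.X t j)| := by ring_nf
              _ ≤ |traj.X t j| + |traj.X (t + 1) j - traj.X t j| := abs_add_le _ _
              _ ≤ |traj.X t j| + η * β := by linarith
          push_cast
          linarith
    -- sign helper
    set sg : Fin n → ℝ := fun i => if xstar i < 0 then -1 else 1 with hsg
    have hsgabs : ∀ i, |sg i| = 1 := by
      intro i
      by_cases hi : xstar i < 0 <;> simp [hsg, hi]
    have hsgx : ∀ i, sg i * xstar i = |xstar i| := by
      intro i
      by_cases hi : xstar i < 0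
      · simp [hsg, hi, abs_of_neg hi]
      · push_neg at hi
        simp [hsg, not_lt.2 hi, abs_of_nonneg hi]
    -- counting function
    set Q : Fin n → ℕ → ℕ :=
      fun i t => ((Finset.range t).filter (fun s => i ∉ traj.S s)).card with hQ
    have hQsucc : ∀ i t, Q i (t + 1) = Q i t + (if i ∉ traj.S t then 1 else 0) := by
      intro i t
      simp only [hQ, Finset.range_add_one, Finset.filter_insert]
      by_cases hi : i ∉ traj.S t
      · rw [if_pos hi, Finset.card_insert_of_notMem (by simp), if_pos hi]
      · rw [if_neg hi, if_neg hi]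
        simp
    -- invariant: on-support entries grow
    have hI2 : ∀ i ∈ spt xstar, ∀ t : ℕ,
        (Q i t : ℝ) * (η * (μ - β)) ≤ sg i * traj.X t i := by
      intro i hi t
      induction t with
      | zero => simp [traj.X_init, hQ]
      | succ t ih =>
        by_cases hiS : i ∈ traj.S t
        · rw [hstep0 t i hiS, hQsucc]
          simp only [hiS, not_true_eq_false, if_false, add_zero]
          exact ih
        · have h1 := hstep t i hiS
          have h2 : -(η * β) ≤ sg i * (traj.X (t + 1) i - traj.X t i - η * xstar i) := by
            calc -(η * β) ≤ -|traj.X (t + 1) i - traj.X t i - η * xstar i| := by linarith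
              _ = -|sg i * (traj.X (t + 1) i - traj.X t i - η * xstar i)| := by
                  rw [abs_mul, hsgabs i, one_mul]
              _ ≤ sg i * (traj.X (t + 1) i - traj.X t i - η * xstar i) := neg_abs_le _
          have hμi : μ ≤ |xstar i| := hμle i hi
          have h4 : sg i * traj.X t i + η * |xstar i| - η * β ≤ sg i * traj.X (t + 1) i := by
            have h5 : sg i * (traj.X (t + 1) i - traj.X t i - η * xstar i)
                = sg i * traj.X (t + 1) i - sg i * traj.X t i - η * (sg i * xstar i) := by
              ring
            rw [h5, hsgx i] at h2
            linarith
          rw [hQsucc]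
          simp only [hiS, not_false_iff, if_pos]
          push_cast
          have h8 : η * μ ≤ η * |xstar i| := mul_le_mul_of_nonneg_left hμi hη.le
          linarith [ih, h4, h8]
    -- the filter-count is controlled at bad steps
    have hQB : ∀ t : ℕ, ∀ i ∈ spt xstar, i ∉ traj.S t →
        (Q i t : ℝ) * (k : ℝ) ≤ ρ * t := by
      intro t i hi hiS
      obtain ⟨j, hjS, hjns⟩ : ∃ j, j ∈ traj.S t ∧ j ∉ spt xstar := by
        by_contra hc
        push_neg at hc
        have hss : traj.S t ⊆ spt xstar := fun j hj => hc j hj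
        have heq := Finset.eq_of_subset_of_card_le hss
          (by rw [traj.card_S t]; exact hspars)
        rw [← heq] at hi
        exact hiS hi
      have h1 := hI2 i hi t
      have h2 : sg i * traj.X t i ≤ |traj.X t i| := by
        calc sg i * traj.X t i ≤ |sg i * traj.X t i| := le_abs_self _
          _ = |traj.X t i| := by rw [abs_mul, hsgabs i, one_mul]
      have h3 := traj.sel t j hjS i hiS
      have h4 := hI1 j hjns t
      have h5 : (Q i t : ℝ) * (η * (μ - β)) ≤ (t : ℝ) * (η * β) := by
        linarith
      have h6 : (Q i t : ℝ) * (μ - β) ≤ (t : ℝ) * β := by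
        have h7 : η * ((Q i t : ℝ) * (μ - β)) ≤ η * ((t : ℝ) * β) := by
          nlinarith [h5]
        exact le_of_mul_le_mul_left h7 hη
      have hQ0 : (0:ℝ) ≤ (Q i t : ℝ) := Nat.cast_nonneg _
      have ht0 : (0:ℝ) ≤ (t : ℝ) := Nat.cast_nonneg _
      have e1 : (k:ℝ) * ((Q i t : ℝ) * (μ - β)) ≤ (k:ℝ) * ((t:ℝ) * β) :=
        mul_le_mul_of_nonneg_left h6 (by linarith)
      have e2 : (t:ℝ) * (2 * ((k:ℝ) * β)) ≤ (t:ℝ) * (ρ * μ) :=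
        mul_le_mul_of_nonneg_left (by linarith [hSRC']) ht0
      have e3 : (0:ℝ) ≤ ρ * (μ - 2 * β) := mul_nonneg hρ0.le (by linarith)
      have e5 : (0:ℝ) ≤ (t:ℝ) * (ρ * (μ - 2 * β)) := mul_nonneg ht0 e3
      have e4 : (Q i t : ℝ) * (k:ℝ) * (μ - β) ≤ ρ * (t:ℝ) * (μ - β) := by
        nlinarith [e1, e2, e5]
      exact le_of_mul_le_mul_right e4 hμβpos
    -- global bound on Q
    have hQB2 : ∀ i ∈ spt xstar, ∀ t : ℕ,
        (Q i t : ℝ) * (k : ℝ) ≤ ρ * ((t : ℝ) - 1) + (k : ℝ) := by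
      intro i hi t
      induction t with
      | zero =>
        simp only [hQ, Finset.range_zero, Finset.filter_empty, Finset.card_empty,
          Nat.cast_zero, zero_mul]
        nlinarith [hρ1, hK1, hρ0.le]
      | succ t ih =>
        by_cases hiS : i ∈ traj.S t
        · rw [hQsucc]
          simp only [hiS, not_true_eq_false, if_false, add_zero]
          push_cast
          linarith [ih, hρ0.le]
        · rw [hQsucc]
          simp only [hiS, not_false_iff, if_pos]
          have h1 := hQB t i hi hiS
          push_cast
          linarith [h1]
    -- final counting argument
    set T : ℕ := ⌈(k : ℝ) / (1 - ρ)⌉₊ with hT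
    have h1ρ : (0:ℝ) < 1 - ρ := by linarith
    have hTge : (k : ℝ) / (1 - ρ) ≤ (T : ℝ) := Nat.le_ceil _
    have hgoodstep : ∃ ts : ℕ, ts ≤ T ∧ spt xstar ⊆ traj.S ts := by
      by_contra hc
      push_neg at hc
      have hbad : ∀ t, t ≤ T → ∃ i ∈ spt xstar, i ∉ traj.S t := by
        intro t ht
        exact Finset.not_subset.1 (hc t ht)
      have hcount : ∀ t ∈ Finset.range (T + 1),
          1 ≤ ((spt xstar).filter (fun i => i ∉ traj.S t)).card := by
        intro t ht
        rw [Finset.mem_range] at ht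
        obtain ⟨i, hi, hiS⟩ := hbad t (by omega)
        refine Finset.card_pos.2 ⟨i, ?_⟩
        rw [Finset.mem_filter]
        exact ⟨hi, hiS⟩
      have hsum1 : (T + 1 : ℕ) ≤ ∑ t ∈ Finset.range (T + 1),
          ((spt xstar).filter (fun i => i ∉ traj.S t)).card := by
        calc (T + 1 : ℕ) = ∑ _t ∈ Finset.range (T + 1), 1 := by
              rw [Finset.sum_const, smul_eq_mul, mul_one, Finset.card_range]
          _ ≤ _ := Finset.sum_le_sum hcount
      have hswap : ∑ t ∈ Finset.range (T + 1),
          ((spt xstar).filter (fun i => i ∉ traj.S t)).card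
          = ∑ i ∈ spt xstar, Q i (T + 1) := by
        have hL : ∀ t, ((spt xstar).filter (fun i => i ∉ traj.S t)).card
            = ∑ i ∈ spt xstar, if i ∉ traj.S t then 1 else 0 :=
          fun t => Finset.card_filter _ _
        have hR : ∀ i, Q i (T + 1)
            = ∑ t ∈ Finset.range (T + 1), if i ∉ traj.S t then 1 else 0 :=
          fun i => Finset.card_filter _ _
        rw [Finset.sum_congr rfl fun t _ => hL t, Finset.sum_comm]
        exact Finset.sum_congr rfl fun i _ => (hR i).symm
      have h1 : ((T : ℝ) + 1) ≤ ∑ i ∈ spt xstar, ((Q i (T + 1) : ℕ) : ℝ) := by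
        have := hsum1.trans_eq hswap
        have hcast : ((T + 1 : ℕ) : ℝ) ≤ ((∑ i ∈ spt xstar, Q i (T + 1) : ℕ) : ℝ) := by
          exact_mod_cast this
        rw [Nat.cast_sum] at hcast
        push_cast at hcast ⊢
        linarith
      have h2 : ∑ i ∈ spt xstar, ((Q i (T + 1) : ℕ) : ℝ) * (k : ℝ)
          ≤ ∑ _i ∈ spt xstar, (ρ * (T : ℝ) + (k : ℝ)) := by
        apply Finset.sum_le_sum
        intro i hi
        have h3 := hQB2 i hi (T + 1)
        push_cast at h3 ⊢
        linarith [h3]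
      rw [Finset.sum_const, nsmul_eq_mul] at h2
      have h3 : ((spt xstar).card : ℝ) ≤ (k : ℝ) := by exact_mod_cast hspars
      have h4 : (0:ℝ) ≤ ρ * (T : ℝ) + (k : ℝ) := by
        have hT0 : (0:ℝ) ≤ (T : ℝ) := Nat.cast_nonneg _
        have := mul_nonneg hρ0.le hT0
        linarith
      have hk0 : (0:ℝ) < (k : ℝ) := lt_of_lt_of_le zero_lt_one hK1
      have h5 : ((T : ℝ) + 1) * (k : ℝ) ≤ (k : ℝ) * (ρ * (T : ℝ) + (k : ℝ)) := by
        calc ((T : ℝ) + 1) * (k : ℝ)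
            ≤ (∑ i ∈ spt xstar, ((Q i (T + 1) : ℕ) : ℝ)) * (k : ℝ) :=
              mul_le_mul_of_nonneg_right h1 hk0.le
          _ = ∑ i ∈ spt xstar, ((Q i (T + 1) : ℕ) : ℝ) * (k : ℝ) := by
              rw [Finset.sum_mul]
          _ ≤ ((spt xstar).card : ℝ) * (ρ * (T : ℝ) + (k : ℝ)) := h2
          _ ≤ (k : ℝ) * (ρ * (T : ℝ) + (k : ℝ)) := mul_le_mul_of_nonneg_right h3 h4
      have h6 : (T : ℝ) + 1 ≤ ρ * (T : ℝ) + (k : ℝ) :=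
        le_of_mul_le_mul_left
          (by linarith [h5] : (k:ℝ) * ((T : ℝ) + 1) ≤ (k:ℝ) * (ρ * (T : ℝ) + (k : ℝ))) hk0
      have h7 : (T : ℝ) * (1 - ρ) ≤ (k : ℝ) - 1 := by linarith [h6]
      have h8 : (k : ℝ) ≤ (T : ℝ) * (1 - ρ) := by
        rw [div_le_iff₀ h1ρ] at hTge
        linarith
      linarith
    obtain ⟨ts, hts, hsub⟩ := hgoodstep
    refine ⟨ts, ?_, hsub, hgood ts hsub⟩
    have h1 : (ts : ℝ) ≤ (T : ℝ) := by exact_mod_cast hts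
    have h2 : (T : ℝ) < (k : ℝ) / (1 - ρ) + 1 :=
      Nat.ceil_lt_add_one (by positivity)
    have h3 : (k : ℝ) / (1 - ρ) + 1 ≤ ((k : ℝ) + 1) / (1 - ρ) := by
      rw [div_add' _ _ _ (ne_of_gt h1ρ), div_le_div_iff₀ h1ρ h1ρ]
      nlinarith [h1ρ, hρ0, mul_pos h1ρ h1ρ]
    linarith

end
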